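/- arXiv:2506.15327 — 3 statements merged into one kernel-verified Lean document; each statement's English description precedes it below -/
import Mathlib

section
/- The formula [α, g] · h = [α, g h] gives a well-defined right action of the group G on the quotient set Ω; this action preserves each fibre π⁻¹(x) of π : Ω → M, and on each fibre it is both free (if [α, g] · h = [α, g] then h = e) and transitive (for any two elements of the same fibre π⁻¹(x) there is an h ∈ G carrying one to the other); that is, each nonempty fibre of π is a G-torsor. -/
open CategoryTheory

universe u v w

/-- `S × G`: pairs of a morphism with source `x₀` and an element of `G`. -/
abbrev SG {M : Type u} [Groupoid.{v} M] (x₀ : M) (G : Type w) : Type _ :=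
  (Σ x : M, (x₀ ⟶ x)) × G

/-- The right action `(α, g) · γ₀ = (α ∘ γ₀, W₀ (γ₀⁻¹) * g)`.  Here `α ∘ γ₀ = γ₀ ≫ α`. -/
def vertexAct {M : Type u} [Groupoid.{v} M] {G : Type w} [Group G] {x₀ : M}
    (W₀ : (x₀ ⟶ x₀) → G) (p : SG x₀ G) (γ₀ : x₀ ⟶ x₀) : SG x₀ G :=
  (⟨p.1.1, γ₀ ≫ p.1.2⟩, W₀ (Groupoid.inv γ₀) * p.2)

/-- The orbit relation of the right action of the vertex group on `S × G`. -/
def OmegaRel {M : Type u} [Groupoid.{v} M] {G : Type w} [Group G] {x₀ : M}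
    (W₀ : (x₀ ⟶ x₀) → G) (p q : SG x₀ G) : Prop :=
  ∃ γ₀ : x₀ ⟶ x₀, q = vertexAct W₀ p γ₀

/-- The quotient `Ω = (S × G) / P(x₀)`. -/
def Omega {M : Type u} [Groupoid.{v} M] {G : Type w} [Group G] {x₀ : M}
    (W₀ : (x₀ ⟶ x₀) → G) : Type _ :=
  Quot (OmegaRel W₀)

/-- The class `[α, g]` of `(α, g)` in `Ω`. -/
def Omega.mk {M : Type u} [Groupoid.{v} M] {G : Type w} [Group G] {x₀ : M}
    (W₀ : (x₀ ⟶ x₀) → G) (p : SG x₀ G) : Omega W₀ :=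
  Quot.mk (OmegaRel W₀) p

/-- The projection `π : Ω → M`, `π [α, g] = target α`; it is well defined since the
target is invariant under the action. -/
def proj {M : Type u} [Groupoid.{v} M] {G : Type w} [Group G] {x₀ : M}
    (W₀ : (x₀ ⟶ x₀) → G) : Omega W₀ → M :=
  Quot.lift (fun p => p.1.1) (by rintro p q ⟨γ₀, rfl⟩; rfl)

/-- The right `G`-action on `Ω`: `[α, g] · h = [α, g * h]`.  It is well defined on
equivalence classes. -/
def actG {M : Type u} [Groupoid.{v} M] {G : Type w} [Group G] {x₀ : M}
    (W₀ : (x₀ ⟶ x₀) → G) (ω : Omega W₀) (h : G) : Omega W₀ :=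
  Quot.lift (fun p => Quot.mk (OmegaRel W₀) (p.1, p.2 * h))
    (by
      rintro p q ⟨γ₀, rfl⟩
      exact Quot.sound ⟨γ₀, by simp [vertexAct, mul_assoc]⟩) ω

/-!
STATEMENT 2. The formula `[α, g] · h = [α, g h]` gives a well-defined right action of
`G` on `Ω`; it preserves each fibre of `π : Ω → M`, and on each fibre it is free and
transitive: each nonempty fibre of `π` is a `G`-torsor.
-/
theorem statement2 {M : Type u} [Groupoid.{v} M] {G : Type w} [Group G] (x₀ : M)
    (W₀ : (x₀ ⟶ x₀) → G)
    (hW₀ : ∀ γ δ : x₀ ⟶ x₀, W₀ (δ ≫ γ) = W₀ γ * W₀ δ) :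
    (∀ (p : SG x₀ G) (h : G), actG W₀ (Omega.mk W₀ p) h = Omega.mk W₀ (p.1, p.2 * h)) ∧
    (∀ ω : Omega W₀, actG W₀ ω 1 = ω) ∧
    (∀ (ω : Omega W₀) (h h' : G), actG W₀ (actG W₀ ω h) h' = actG W₀ ω (h * h')) ∧
    (∀ (ω : Omega W₀) (h : G), proj W₀ (actG W₀ ω h) = proj W₀ ω) ∧
    (∀ (ω : Omega W₀) (h : G), actG W₀ ω h = ω → h = 1) ∧
    (∀ ω ω' : Omega W₀, proj W₀ ω = proj W₀ ω' → ∃ h : G, actG W₀ ω h = ω') := by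
  -- W₀ sends the identity to 1
  have hW1 : W₀ (𝟙 x₀) = 1 := by
    have := hW₀ (𝟙 x₀) (𝟙 x₀)
    simp at this
    exact this
  have hWinv : ∀ γ : x₀ ⟶ x₀, W₀ (Groupoid.inv γ) = (W₀ γ)⁻¹ := by
    intro γ
    have := hW₀ γ (Groupoid.inv γ)
    rw [Groupoid.inv_comp, hW1] at this
    exact eq_inv_of_mul_eq_one_right this.symm
  -- the orbit relation is an equivalence relation
  have hequiv : Equivalence (OmegaRel (x₀ := x₀) W₀) := by
    constructor
    · intro p
      refine ⟨𝟙 x₀, ?_⟩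
      have h0 : Groupoid.inv (𝟙 x₀) = 𝟙 x₀ := by simp [Groupoid.inv_eq_inv]
      simp [vertexAct, h0, hW1]
    · rintro p q ⟨γ₀, rfl⟩
      refine ⟨Groupoid.inv γ₀, ?_⟩
      have h1 : Groupoid.inv (Groupoid.inv γ₀) = γ₀ := by simp [Groupoid.inv_eq_inv]
      simp only [vertexAct, h1, ← Category.assoc, Groupoid.inv_comp, Category.id_comp,
        ← mul_assoc, ← hW₀, hW1, one_mul]
    · rintro p q r ⟨γ₀, rfl⟩ ⟨γ₁, rfl⟩
      refine ⟨γ₁ ≫ γ₀, ?_⟩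
      have h2 : Groupoid.inv (γ₁ ≫ γ₀) = Groupoid.inv γ₀ ≫ Groupoid.inv γ₁ := by
        simp [Groupoid.inv_eq_inv]
      simp [vertexAct, h2, hW₀, mul_assoc]
  refine ⟨fun p h => rfl, ?_, ?_, ?_, ?_, ?_⟩
  · intro ω
    induction ω using Quot.ind with
    | mk p => exact congrArg (Quot.mk _) (by simp)
  · intro ω h h'
    induction ω using Quot.ind with
    | mk p => exact congrArg (Quot.mk _) (by simp [mul_assoc])
  · intro ω h
    induction ω using Quot.ind with
    | mk p => rfl
  · intro ω h hfix
    induction ω using Quot.ind with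
    | mk p =>
      obtain ⟨⟨x, α⟩, g⟩ := p
      have hrel : OmegaRel W₀ ((⟨x, α⟩, g * h)) ((⟨x, α⟩, g)) :=
        (hequiv.eqvGen_iff).mp (Quot.eqvGen_exact hfix)
      obtain ⟨γ₀, heq⟩ := hrel
      have hα : α = γ₀ ≫ α := by
        have := congrArg (fun p => p.1) heq
        simpa [vertexAct] using this
      have hg : g = W₀ (Groupoid.inv γ₀) * (g * h) := congrArg Prod.snd heq
      have hγ : γ₀ = 𝟙 x₀ := by
        have : γ₀ ≫ α = 𝟙 x₀ ≫ α := by rw [← hα, Category.id_comp]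
        exact (cancel_mono α).mp this
      rw [hγ] at hg
      have h0 : Groupoid.inv (𝟙 x₀) = 𝟙 x₀ := by simp [Groupoid.inv_eq_inv]
      rw [h0, hW1, one_mul] at hg
      exact left_eq_mul.mp hg
  · intro ω ω' hproj
    induction ω using Quot.ind with
    | mk p =>
      induction ω' using Quot.ind with
      | mk q =>
        obtain ⟨⟨x, α⟩, g⟩ := p
        obtain ⟨⟨x', α'⟩, g'⟩ := q
        have hx : x = x' := hproj
        subst hx
        set γ₀ : x₀ ⟶ x₀ := α' ≫ Groupoid.inv α with hγ₀
        refine ⟨g⁻¹ * (W₀ (Groupoid.inv γ₀))⁻¹ * g', Quot.sound ⟨γ₀, ?_⟩⟩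
        have h1 : (⟨x, α'⟩ : Σ y, x₀ ⟶ y) = ⟨x, γ₀ ≫ α⟩ := by
          simp [hγ₀, Groupoid.inv_eq_inv]
        have h2 : g' = W₀ (Groupoid.inv γ₀) *
            (g * (g⁻¹ * (W₀ (Groupoid.inv γ₀))⁻¹ * g')) := by group
        simp only [vertexAct]
        exact Prod.ext h1 h2
end

section
/- (Reconstruction theorem, existence part.) Let P be a connected groupoid with object type M (for any two objects there is a morphism between them), x₀ an object of P, G a group, and W₀ : P(x₀) → G a group homomorphism from the vertex group of P at x₀. Then there exist: a set Ω; a surjection π : Ω → M; a right action of G on Ω preserving the fibres of π which is free and transitive on each fibre; a bijection j : G → π⁻¹(x₀); and, for each morphism β : y ⟶ z of P, a G-equivariant bijection W(β) : π⁻¹(y) → π⁻¹(z), such that W(β₂ ∘ β₁) = W(β₂) ∘ W(β₁) for all composable β₁, β₂, W(1_y) = id for every object y, and j⁻¹(W(β₀)(j(g))) = W₀(β₀) · g for all β₀ ∈ P(x₀) and g ∈ G. -/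
open CategoryTheory

universe u v w

theorem statement7 {M : Type u} [Groupoid.{v} M] (x₀ : M)
    (hconn : ∀ x y : M, Nonempty (x ⟶ y))
    {G : Type w} [Group G] (W₀ : (x₀ ⟶ x₀) → G)
    (hW₀ : ∀ γ δ : x₀ ⟶ x₀, W₀ (δ ≫ γ) = W₀ γ * W₀ δ) :
    ∃ (Ω : Type (max u v w)) (π : Ω → M) (actG : Ω → G → Ω),
      Function.Surjective π ∧
      (∀ ω : Ω, actG ω 1 = ω) ∧
      (∀ (ω : Ω) (h h' : G), actG (actG ω h) h' = actG ω (h * h')) ∧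
      (∀ (ω : Ω) (h : G), π (actG ω h) = π ω) ∧
      (∀ (ω : Ω) (h : G), actG ω h = ω → h = 1) ∧
      (∀ ω ω' : Ω, π ω = π ω' → ∃ h : G, actG ω h = ω') ∧
      ∃ (j : G → {ω : Ω // π ω = x₀})
        (W : ∀ (y z : M), (y ⟶ z) → {ω : Ω // π ω = y} → {ω : Ω // π ω = z}),
        Function.Bijective j ∧
        (∀ (y z : M) (β : y ⟶ z), Function.Bijective (W y z β)) ∧
        (∀ (y z : M) (β : y ⟶ z) (ω ω' : {ω : Ω // π ω = y}) (h : G),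
          ω'.1 = actG ω.1 h → (W y z β ω').1 = actG (W y z β ω).1 h) ∧
        (∀ (y z w : M) (β₁ : y ⟶ z) (β₂ : z ⟶ w),
          W y w (β₁ ≫ β₂) = fun ω => W z w β₂ (W y z β₁ ω)) ∧
        (∀ y : M, W y y (𝟙 y) = id) ∧
        (∀ (β₀ : x₀ ⟶ x₀) (g : G), W x₀ x₀ β₀ (j g) = j (W₀ β₀ * g)) := by
  -- choose a morphism from x₀ to each object
  have τ : ∀ x : M, (x₀ ⟶ x) := fun x => (hconn x₀ x).some
  -- basic facts about W₀
  have hW1 : W₀ (𝟙 x₀) = 1 := by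
    have := hW₀ (𝟙 x₀) (𝟙 x₀)
    rw [Category.comp_id] at this
    exact (mul_eq_left.mp this.symm)
  have hWinv : ∀ γ : x₀ ⟶ x₀, W₀ (Groupoid.inv γ) = (W₀ γ)⁻¹ := by
    intro γ
    have := hW₀ (Groupoid.inv γ) γ
    rw [Groupoid.comp_inv, hW1] at this
    exact eq_inv_of_mul_eq_one_left this.symm
  set c : x₀ ⟶ x₀ := τ x₀ with hc
  refine ⟨ULift.{max v w} M × G, fun p => p.1.down, fun p h => (p.1, p.2 * h),
    fun x => ⟨(⟨x⟩, 1), rfl⟩, fun p => by simp, fun p h h' => by simp [mul_assoc],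
    fun p h => rfl, fun p h hp => by simpa using congrArg Prod.snd hp,
    fun p p' hpp => ⟨p.2⁻¹ * p'.2, by
      refine Prod.ext ?_ (by simp)
      exact ULift.ext _ _ hpp⟩, ?_⟩
  refine ⟨fun g => ⟨(⟨x₀⟩, (W₀ c)⁻¹ * g), rfl⟩,
    fun y z β ω => ⟨(⟨z⟩, W₀ (τ y ≫ β ≫ Groupoid.inv (τ z)) * ω.1.2), rfl⟩,
    ?_, ?_, ?_, ?_, ?_, ?_⟩
  · constructor
    · intro g g' h
      have := congrArg (fun q => (W₀ c) * q.1.2) h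
      simpa using this
    · intro ⟨⟨p, g⟩, hp⟩
      refine ⟨W₀ c * g, ?_⟩
      apply Subtype.ext
      refine Prod.ext ?_ (by simp)
      exact (ULift.ext _ _ hp.symm)
  · intro y z β
    constructor
    · intro ω ω' h
      have h2 := congrArg (fun q => (W₀ (τ y ≫ β ≫ Groupoid.inv (τ z)))⁻¹ * q.1.2) h
      simp at h2
      apply Subtype.ext
      refine Prod.ext ?_ h2
      exact ULift.ext _ _ (ω.2.trans ω'.2.symm)
    · intro ⟨⟨p, g⟩, hp⟩
      refine ⟨⟨(⟨y⟩, (W₀ (τ y ≫ β ≫ Groupoid.inv (τ z)))⁻¹ * g), rfl⟩, ?_⟩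
      apply Subtype.ext
      refine Prod.ext ?_ (by simp)
      exact ULift.ext _ _ hp.symm
  · intro y z β ω ω' h hg
    have h2 : ω'.1.2 = ω.1.2 * h := congrArg Prod.snd hg
    refine Prod.ext rfl ?_
    show W₀ (τ y ≫ β ≫ Groupoid.inv (τ z)) * ω'.1.2
      = W₀ (τ y ≫ β ≫ Groupoid.inv (τ z)) * ω.1.2 * h
    rw [h2, mul_assoc]
  · intro y z w β₁ β₂
    funext ω
    apply Subtype.ext
    refine Prod.ext rfl ?_
    show W₀ (τ y ≫ (β₁ ≫ β₂) ≫ Groupoid.inv (τ w)) * ω.1.2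
      = W₀ (τ z ≫ β₂ ≫ Groupoid.inv (τ w)) * (W₀ (τ y ≫ β₁ ≫ Groupoid.inv (τ z)) * ω.1.2)
    rw [← mul_assoc, ← hW₀]
    congr 2
    simp [Category.assoc, Groupoid.inv_comp]
  · intro y
    funext ω
    apply Subtype.ext
    refine Prod.ext ?_ ?_
    · exact ULift.ext _ _ ω.2.symm
    · show W₀ (τ y ≫ 𝟙 y ≫ Groupoid.inv (τ y)) * ω.1.2 = ω.1.2
      rw [Category.id_comp, Groupoid.comp_inv, hW1, one_mul]
  · intro β₀ g
    apply Subtype.ext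
    refine Prod.ext rfl ?_
    show W₀ (c ≫ β₀ ≫ Groupoid.inv c) * ((W₀ c)⁻¹ * g) = (W₀ c)⁻¹ * (W₀ β₀ * g)
    have h1 : W₀ (c ≫ β₀ ≫ Groupoid.inv c) = (W₀ c)⁻¹ * W₀ β₀ * W₀ c := by
      rw [hW₀, hW₀, hWinv]
    rw [h1]
    group
end

section
/- Let Γ be a groupoid, X a type, A, B ⊆ X subsets with A ∩ B nonempty. Let F, F' : Pair(A) ⥤ Γ and H, H' : Pair(B) ⥤ Γ be functors such that F agrees with H, and F' agrees with H', after composition with the inclusion functors from Pair(A ∩ B), and let K = glue(F, H) and K' = glue(F', H') be the glued functors on Pair(A ∪ B). Let ν : F ⇒ F' and ν' : H ⇒ H' be natural transformations with ν(x) = ν'(x) for all x ∈ A ∩ B. Then the family assigning ν(a) to each a ∈ A and ν'(b) to each b ∈ B is well defined and is a natural transformation ν ⊔ ν' : K ⇒ K'. -/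
open CategoryTheory

universe u v w

/-- The pair (codiscrete) groupoid on a type `A`: objects are the elements of `A`
and there is exactly one morphism `a ⟶ b` for every ordered pair `(a, b)`. -/
def PairGpd (A : Type u) : Type u := A

instance pairGroupoid (A : Type u) : Groupoid (PairGpd A) where
  Hom _ _ := PUnit
  id _ := PUnit.unit
  comp _ _ := PUnit.unit
  id_comp _ := rfl
  comp_id _ := rfl
  assoc _ _ _ := rfl
  inv _ := PUnit.unit
  inv_comp _ := rfl
  comp_inv _ := rfl

/-- The unique morphism `a ⟶ b` of the pair groupoid. -/
def pairHom {A : Type u} (a b : PairGpd A) : a ⟶ b := PUnit.unit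

/-- The inclusion functor `Pair(S) ⥤ Pair(T)` induced by an inclusion of subsets
`S ⊆ T` of a type `X`. -/
def pairIncl {X : Type u} {S T : Set X} (h : S ⊆ T) : PairGpd ↥S ⥤ PairGpd ↥T where
  obj a := (Set.inclusion h a : PairGpd ↥T)
  map _ := PUnit.unit
  map_id _ := rfl
  map_comp _ _ := rfl

/-!
STATEMENT 16. Let `Γ` be a groupoid, `X` a type, `A, B ⊆ X` with `A ∩ B` nonempty.
Let `F, F' : Pair(A) ⥤ Γ` and `H, H' : Pair(B) ⥤ Γ` be functors such that `F` agrees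
with `H`, and `F'` agrees with `H'`, after composition with the inclusion functors
from `Pair(A ∩ B)`, and let `K = glue F H` and `K' = glue F' H'` be the glued functors
on `Pair(A ∪ B)` (characterized by their restriction equations).  Let `ν : F ⇒ F'`
and `ν' : H ⇒ H'` be natural transformations with `ν x = ν' x` for all `x ∈ A ∩ B`
(along the canonical identifications).  Then the family assigning `ν a` to each
`a ∈ A` and `ν' b` to each `b ∈ B` is well defined and is a natural transformation
`ν ⊔ ν' : K ⇒ K'`.
-/
theorem statement16 {X : Type u} {Γ : Type v} [Groupoid.{w} Γ] (A B : Set X)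
    (hAB : (A ∩ B).Nonempty)
    (F F' : PairGpd ↥A ⥤ Γ) (H H' : PairGpd ↥B ⥤ Γ)
    (hFH : pairIncl (Set.inter_subset_left (s := A) (t := B)) ⋙ F
      = pairIncl (Set.inter_subset_right (s := A) (t := B)) ⋙ H)
    (hFH' : pairIncl (Set.inter_subset_left (s := A) (t := B)) ⋙ F'
      = pairIncl (Set.inter_subset_right (s := A) (t := B)) ⋙ H')
    (K K' : PairGpd ↥(A ∪ B) ⥤ Γ)
    (hK₁ : pairIncl (Set.subset_union_left (s := A) (t := B)) ⋙ K = F)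
    (hK₂ : pairIncl (Set.subset_union_right (s := A) (t := B)) ⋙ K = H)
    (hK'₁ : pairIncl (Set.subset_union_left (s := A) (t := B)) ⋙ K' = F')
    (hK'₂ : pairIncl (Set.subset_union_right (s := A) (t := B)) ⋙ K' = H')
    (ν : F ⟶ F') (ν' : H ⟶ H')
    (hνν' : ∀ x : PairGpd ↥(A ∩ B),
      ν.app ((pairIncl (Set.inter_subset_left (s := A) (t := B))).obj x)
          ≫ eqToHom (Functor.congr_obj hFH' x)
        = eqToHom (Functor.congr_obj hFH x)
          ≫ ν'.app ((pairIncl (Set.inter_subset_right (s := A) (t := B))).obj x)) :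
    ∃ τ : K ⟶ K',
      (∀ a : PairGpd ↥A,
        τ.app ((pairIncl (Set.subset_union_left (s := A) (t := B))).obj a)
          = eqToHom (Functor.congr_obj hK₁ a) ≫ ν.app a
              ≫ eqToHom (Functor.congr_obj hK'₁ a).symm) ∧
      (∀ b : PairGpd ↥B,
        τ.app ((pairIncl (Set.subset_union_right (s := A) (t := B))).obj b)
          = eqToHom (Functor.congr_obj hK₂ b) ≫ ν'.app b
              ≫ eqToHom (Functor.congr_obj hK'₂ b).symm) := by
  classical
  obtain ⟨z, hzA, hzB⟩ := hAB
  -- abbreviations for the two candidate formulas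
  let Aform : ∀ (x : PairGpd ↥(A ∪ B)), x.1 ∈ A → (K.obj x ⟶ K'.obj x) :=
    fun x hx =>
      eqToHom (show K.obj x = F.obj ⟨x.1, hx⟩ from Functor.congr_obj hK₁ ⟨x.1, hx⟩)
        ≫ ν.app ⟨x.1, hx⟩
        ≫ eqToHom (show K'.obj x = F'.obj ⟨x.1, hx⟩ from
            Functor.congr_obj hK'₁ ⟨x.1, hx⟩).symm
  let Bform : ∀ (x : PairGpd ↥(A ∪ B)), x.1 ∈ B → (K.obj x ⟶ K'.obj x) :=
    fun x hx =>
      eqToHom (show K.obj x = H.obj ⟨x.1, hx⟩ from Functor.congr_obj hK₂ ⟨x.1, hx⟩)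
        ≫ ν'.app ⟨x.1, hx⟩
        ≫ eqToHom (show K'.obj x = H'.obj ⟨x.1, hx⟩ from
            Functor.congr_obj hK'₂ ⟨x.1, hx⟩).symm
  -- well-definedness on the overlap
  have key : ∀ (x : PairGpd ↥(A ∪ B)) (hxA : x.1 ∈ A) (hxB : x.1 ∈ B),
      Aform x hxA = Bform x hxB := by
    intro x hxA hxB
    have h : ν.app ⟨x.1, hxA⟩
          ≫ eqToHom (show F'.obj ⟨x.1, hxA⟩ = H'.obj ⟨x.1, hxB⟩ from
              Functor.congr_obj hFH' ⟨x.1, hxA, hxB⟩)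
        = eqToHom (show F.obj ⟨x.1, hxA⟩ = H.obj ⟨x.1, hxB⟩ from
              Functor.congr_obj hFH ⟨x.1, hxA, hxB⟩)
          ≫ ν'.app ⟨x.1, hxB⟩ := hνν' ⟨x.1, hxA, hxB⟩
    have h' : ν.app ⟨x.1, hxA⟩
        = eqToHom (show F.obj ⟨x.1, hxA⟩ = H.obj ⟨x.1, hxB⟩ from
              Functor.congr_obj hFH ⟨x.1, hxA, hxB⟩)
          ≫ ν'.app ⟨x.1, hxB⟩
          ≫ eqToHom (show F'.obj ⟨x.1, hxA⟩ = H'.obj ⟨x.1, hxB⟩ from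
              Functor.congr_obj hFH' ⟨x.1, hxA, hxB⟩).symm := by
      rw [← Category.assoc, ← h]; simp
    show Aform x hxA = Bform x hxB
    simp only [Aform, Bform, h', Category.assoc, eqToHom_trans, eqToHom_trans_assoc]
  -- naturality squares for the A-formula
  have natA : ∀ (x y : PairGpd ↥(A ∪ B)) (hx : x.1 ∈ A) (hy : y.1 ∈ A),
      K.map (pairHom x y) ≫ Aform y hy = Aform x hx ≫ K'.map (pairHom x y) := by
    intro x y hx hy
    have hm : K.map (pairHom x y)
        = eqToHom (show K.obj x = F.obj ⟨x.1, hx⟩ from Functor.congr_obj hK₁ ⟨x.1, hx⟩)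
          ≫ F.map (pairHom (A := ↥A) ⟨x.1, hx⟩ ⟨y.1, hy⟩)
          ≫ eqToHom (show F.obj ⟨y.1, hy⟩ = K.obj y from
              (Functor.congr_obj hK₁ ⟨y.1, hy⟩).symm) :=
      Functor.congr_hom hK₁ (pairHom (A := ↥A) ⟨x.1, hx⟩ ⟨y.1, hy⟩)
    have hm' : K'.map (pairHom x y)
        = eqToHom (show K'.obj x = F'.obj ⟨x.1, hx⟩ from Functor.congr_obj hK'₁ ⟨x.1, hx⟩)
          ≫ F'.map (pairHom (A := ↥A) ⟨x.1, hx⟩ ⟨y.1, hy⟩)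
          ≫ eqToHom (show F'.obj ⟨y.1, hy⟩ = K'.obj y from
              (Functor.congr_obj hK'₁ ⟨y.1, hy⟩).symm) :=
      Functor.congr_hom hK'₁ (pairHom (A := ↥A) ⟨x.1, hx⟩ ⟨y.1, hy⟩)
    simp only [Aform, hm, hm', Category.assoc, eqToHom_trans, eqToHom_trans_assoc,
      eqToHom_refl, Category.id_comp, Category.comp_id]
    exact (eqToHom _) ≫= ν.naturality_assoc _ _
  -- naturality squares for the B-formula
  have natB : ∀ (x y : PairGpd ↥(A ∪ B)) (hx : x.1 ∈ B) (hy : y.1 ∈ B),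
      K.map (pairHom x y) ≫ Bform y hy = Bform x hx ≫ K'.map (pairHom x y) := by
    intro x y hx hy
    have hm : K.map (pairHom x y)
        = eqToHom (show K.obj x = H.obj ⟨x.1, hx⟩ from Functor.congr_obj hK₂ ⟨x.1, hx⟩)
          ≫ H.map (pairHom (A := ↥B) ⟨x.1, hx⟩ ⟨y.1, hy⟩)
          ≫ eqToHom (show H.obj ⟨y.1, hy⟩ = K.obj y from
              (Functor.congr_obj hK₂ ⟨y.1, hy⟩).symm) :=
      Functor.congr_hom hK₂ (pairHom (A := ↥B) ⟨x.1, hx⟩ ⟨y.1, hy⟩)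
    have hm' : K'.map (pairHom x y)
        = eqToHom (show K'.obj x = H'.obj ⟨x.1, hx⟩ from Functor.congr_obj hK'₂ ⟨x.1, hx⟩)
          ≫ H'.map (pairHom (A := ↥B) ⟨x.1, hx⟩ ⟨y.1, hy⟩)
          ≫ eqToHom (show H'.obj ⟨y.1, hy⟩ = K'.obj y from
              (Functor.congr_obj hK'₂ ⟨y.1, hy⟩).symm) :=
      Functor.congr_hom hK'₂ (pairHom (A := ↥B) ⟨x.1, hx⟩ ⟨y.1, hy⟩)
    simp only [Bform, hm, hm', Category.assoc, eqToHom_trans, eqToHom_trans_assoc,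
      eqToHom_refl, Category.id_comp, Category.comp_id]
    exact (eqToHom _) ≫= ν'.naturality_assoc _ _
  set zU : PairGpd ↥(A ∪ B) := ⟨z, Or.inl hzA⟩ with hzU
  refine ⟨{ app := fun x => if h : x.1 ∈ A then Aform x h
              else Bform x (x.2.resolve_left h),
            naturality := ?_ }, ?_, ?_⟩
  · intro x y f
    have hf : f = pairHom x y := rfl
    beta_reduce
    by_cases hx : x.1 ∈ A <;> by_cases hy : y.1 ∈ A
    · rw [dif_pos hx, dif_pos hy, hf]; exact natA x y hx hy
    · rw [dif_pos hx, dif_neg hy, hf]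
      have hyB : y.1 ∈ B := y.2.resolve_left hy
      have hsplit : pairHom x y = pairHom x zU ≫ pairHom zU y := rfl
      rw [hsplit, K.map_comp, K'.map_comp, Category.assoc, natB zU y hzB hyB,
        ← key zU hzA hzB, ← Category.assoc, natA x zU hx hzA, Category.assoc]
    · rw [dif_neg hx, dif_pos hy, hf]
      have hxB : x.1 ∈ B := x.2.resolve_left hx
      have hsplit : pairHom x y = pairHom x zU ≫ pairHom zU y := rfl
      rw [hsplit, K.map_comp, K'.map_comp, Category.assoc, natA zU y hzA hy,
        key zU hzA hzB, ← Category.assoc, natB x zU hxB hzB, Category.assoc]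
    · rw [dif_neg hx, dif_neg hy, hf]
      exact natB x y (x.2.resolve_left hx) (y.2.resolve_left hy)
  · intro a
    show (if h : a.1 ∈ A then _ else _) = _
    rw [dif_pos a.2]; rfl
  · intro b
    show (if h : b.1 ∈ A then _ else _) = _
    by_cases h : b.1 ∈ A
    · rw [dif_pos h]
      exact key ⟨b.1, Or.inl h⟩ h b.2
    · rw [dif_neg h]; rfl
end
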